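/- If X ~ NB(μ, b), X1 | X = x ~ Binomial(x, ε) with ε ∈ (0,1), and X2 = X - X1, then Cov(X1, X2) = ε(1-ε) μ²/b > 0; consequently Cor(X1, X2) = sqrt(ε(1-ε)) / sqrt(b²/μ² + b/μ + ε(1-ε)). -/

import Mathlib

/-- The negative binomial pmf in the mean/overdispersion parameterization `NB(μ, b)`. -/
noncomputable def nbPMF (μ b : ℝ) (k : ℕ) : ℝ :=
  Real.Gamma (k + b) / (Real.Gamma b * (Nat.factorial k)) *
    (μ / (μ + b)) ^ k * (b / (μ + b)) ^ b

/-- The binomial pmf with `n` trials and success probability `p`, evaluated at `k`. -/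
noncomputable def binomPMF (n : ℕ) (p : ℝ) (k : ℕ) : ℝ :=
  (n.choose k) * p ^ k * (1 - p) ^ (n - k)


open Real MeasureTheory

lemma gamma_series {b x : ℝ} (hb : 0 < b) (hx0 : 0 ≤ x) (hx1 : x < 1) :
    HasSum (fun n : ℕ => Real.Gamma (n + b) / (Real.Gamma b * n.factorial) * x ^ n)
      ((1 - x) ^ (-b)) := by
  have h1x : 0 < 1 - x := by linarith
  set a : ℕ → ℝ := fun n => Real.Gamma (n + b) * (x ^ n / n.factorial) with ha
  set A : ℝ := (1 / (1 - x)) ^ b * Real.Gamma b with hA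
  have hnb : ∀ n : ℕ, (0:ℝ) < n + b := fun n => by positivity
  have ha_nonneg : ∀ n, 0 ≤ a n := fun n => by
    have := (Real.Gamma_pos_of_pos (hnb n)).le
    positivity
  -- the ENNReal-valued integrands
  set F : ℕ → ℝ → ENNReal := fun n t =>
    ENNReal.ofReal (Real.exp (-t) * t ^ ((n : ℝ) + b - 1) * (x ^ n / n.factorial)) with hF
  have hFmeas : ∀ n, Measurable (F n) := by
    intro n
    apply Measurable.ennreal_ofReal
    fun_prop
  -- step 1
  have step1 : ∀ n : ℕ, ∫⁻ t in Set.Ioi (0:ℝ), F n t = ENNReal.ofReal (a n) := by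
    intro n
    have hint : IntegrableOn
        (fun t : ℝ => Real.exp (-t) * t ^ ((n : ℝ) + b - 1) * (x ^ n / n.factorial))
        (Set.Ioi 0) :=
      (Real.GammaIntegral_convergent (hnb n)).mul_const _
    rw [← MeasureTheory.ofReal_integral_eq_lintegral_ofReal hint]
    · rw [MeasureTheory.integral_mul_const, ← Real.Gamma_eq_integral (hnb n)]
    · filter_upwards [ae_restrict_mem measurableSet_Ioi] with t ht
      have := Real.rpow_pos_of_pos ht ((n : ℝ) + b - 1)
      positivity
  -- step 2 : pointwise sum of the F n
  have step2 : ∀ t ∈ Set.Ioi (0:ℝ),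
      ∑' n, F n t = ENNReal.ofReal (t ^ (b - 1) * Real.exp (-((1 - x) * t))) := by
    intro t ht
    rw [Set.mem_Ioi] at ht
    have hexp : HasSum (fun n : ℕ => (x * t) ^ n / n.factorial) (Real.exp (x * t)) := by
      rw [Real.exp_eq_exp_ℝ]
      exact NormedSpace.expSeries_div_hasSum_exp (x * t)
    have hsum : HasSum (fun n : ℕ => Real.exp (-t) * t ^ ((n : ℝ) + b - 1) * (x ^ n / n.factorial))
        (t ^ (b - 1) * Real.exp (-((1 - x) * t))) := by
      have h := hexp.mul_left (Real.exp (-t) * t ^ (b - 1))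
      have e1 : (fun n : ℕ => Real.exp (-t) * t ^ (b - 1) * ((x * t) ^ n / n.factorial)) =
          fun n : ℕ => Real.exp (-t) * t ^ ((n : ℝ) + b - 1) * (x ^ n / n.factorial) := by
        funext n
        rw [show (n : ℝ) + b - 1 = (b - 1) + (n : ℝ) by ring, Real.rpow_add ht,
          Real.rpow_natCast, mul_pow]
        ring
      have e2 : Real.exp (-t) * t ^ (b - 1) * Real.exp (x * t) =
          t ^ (b - 1) * Real.exp (-((1 - x) * t)) := by
        rw [show -((1 - x) * t) = x * t + -t by ring, Real.exp_add]
        ring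
      rw [e1, e2] at h
      exact h
    have hnn : ∀ n : ℕ, 0 ≤ Real.exp (-t) * t ^ ((n : ℝ) + b - 1) * (x ^ n / n.factorial) := by
      intro n
      have := (Real.rpow_pos_of_pos ht ((n : ℝ) + b - 1)).le
      positivity
    rw [← hsum.tsum_eq, ENNReal.ofReal_tsum_of_nonneg hnn hsum.summable]
  -- step 3 : total integral
  have step3 : ∑' n, ENNReal.ofReal (a n) = ENNReal.ofReal A := by
    rw [← funext step1, ← MeasureTheory.lintegral_tsum (fun n => (hFmeas n).aemeasurable)]
    rw [setLIntegral_congr_fun_ae measurableSet_Ioi (ae_of_all _ step2)]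
    have hint : IntegrableOn (fun t : ℝ => t ^ (b - 1) * Real.exp (-((1 - x) * t)))
        (Set.Ioi 0) := by
      have h2 : (fun t : ℝ => t ^ (b - 1) * Real.exp (-((1 - x) * t))) =
          fun t : ℝ => t ^ (b - 1) * Real.exp (-(1 - x) * t ^ (1 : ℝ)) := by
        funext t
        rw [Real.rpow_one, neg_mul]
      rw [h2]
      exact integrableOn_rpow_mul_exp_neg_mul_rpow (show (-1:ℝ) < b - 1 by linarith)
        (zero_lt_one (α := ℝ)) h1x
    rw [← MeasureTheory.ofReal_integral_eq_lintegral_ofReal hint]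
    · rw [Real.integral_rpow_mul_exp_neg_mul_Ioi hb h1x]
    · filter_upwards [ae_restrict_mem measurableSet_Ioi] with t ht
      have := (Real.rpow_pos_of_pos ht (b - 1)).le
      positivity
  -- extract a real HasSum
  have hAnn : 0 ≤ A := by
    have := (Real.Gamma_pos_of_pos hb).le
    positivity
  have hsumm : Summable a := by
    have h := ENNReal.summable_toReal (by rw [step3]; exact ENNReal.ofReal_ne_top)
    simpa [ENNReal.toReal_ofReal, ha_nonneg] using
      h.congr (fun n => ENNReal.toReal_ofReal (ha_nonneg n))
  have htsum : ∑' n, a n = A := by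
    have h := congrArg ENNReal.toReal step3
    rw [ENNReal.tsum_toReal_eq (fun n => ENNReal.ofReal_ne_top)] at h
    simpa [ENNReal.toReal_ofReal, ha_nonneg, ENNReal.toReal_ofReal hAnn] using h
  have hHS : HasSum a A := htsum ▸ hsumm.hasSum
  have h := hHS.mul_right (Real.Gamma b)⁻¹
  have hΓ : Real.Gamma b ≠ 0 := (Real.Gamma_pos_of_pos hb).ne'
  have e2 : (fun n : ℕ => a n * (Real.Gamma b)⁻¹) =
      fun n : ℕ => Real.Gamma (n + b) / (Real.Gamma b * n.factorial) * x ^ n := by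
    funext n
    have hfac : (n.factorial : ℝ) ≠ 0 := Nat.cast_ne_zero.mpr n.factorial_ne_zero
    field_simp [ha]
    simp only [ha]; rw [mul_assoc, div_mul_cancel₀ _ hfac]
  have e3 : A * (Real.Gamma b)⁻¹ = (1 - x) ^ (-b) := by
    rw [hA, mul_inv_cancel_right₀ hΓ, one_div, Real.inv_rpow h1x.le, ← Real.rpow_neg h1x.le]
  rw [e2, e3] at h
  exact h

section NB

lemma nb_nonneg {μ b : ℝ} (hμ : 0 < μ) (hb : 0 < b) (n : ℕ) : 0 ≤ nbPMF μ b n := by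
  unfold nbPMF
  have h1 : (0:ℝ) < (n:ℝ) + b := by positivity
  have h2 := (Real.Gamma_pos_of_pos h1).le
  have h3 := (Real.Gamma_pos_of_pos hb).le
  positivity

lemma nb_hasSum {μ b : ℝ} (hμ : 0 < μ) (hb : 0 < b) : HasSum (nbPMF μ b) 1 := by
  have hμb : 0 < μ + b := by positivity
  have hp0 : 0 ≤ μ / (μ + b) := by positivity
  have hp1 : μ / (μ + b) < 1 := by rw [div_lt_one hμb]; linarith
  have h1x : 0 < 1 - μ / (μ + b) := by linarith
  have hq : 1 - μ / (μ + b) = b / (μ + b) := by field_simp; ring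
  have h := (gamma_series hb hp0 hp1).mul_right ((1 - μ / (μ + b)) ^ b)
  rw [← Real.rpow_add h1x, neg_add_cancel, Real.rpow_zero] at h
  have e : (fun n : ℕ => Real.Gamma (n + b) / (Real.Gamma b * n.factorial) * (μ / (μ + b)) ^ n *
      ((1 - μ / (μ + b)) ^ b)) = nbPMF μ b := by
    funext n
    rw [hq, nbPMF]
  rwa [e] at h

lemma nb_shift {μ b : ℝ} (hμ : 0 < μ) (hb : 0 < b) (n : ℕ) :
    ((n : ℝ) + 1) * nbPMF μ b (n + 1) = μ * nbPMF (μ * (b + 1) / b) (b + 1) n := by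
  have hμb : 0 < μ + b := by positivity
  have hp : μ * (b + 1) / b / (μ * (b + 1) / b + (b + 1)) = μ / (μ + b) := by
    rw [div_eq_div_iff (show (0:ℝ) < μ * (b + 1) / b + (b + 1) by positivity).ne' hμb.ne']
    field_simp
  have hq : (b + 1) / (μ * (b + 1) / b + (b + 1)) = b / (μ + b) := by
    rw [div_eq_div_iff (show (0:ℝ) < μ * (b + 1) / b + (b + 1) by positivity).ne' hμb.ne']
    field_simp
  unfold nbPMF
  rw [hp, hq]
  have hΓarg : ((n + 1 : ℕ) : ℝ) + b = ((n : ℝ) + b) + 1 := by push_cast; ring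
  have hΓarg2 : (n : ℝ) + (b + 1) = ((n : ℝ) + b) + 1 := by ring
  rw [hΓarg, hΓarg2, Real.Gamma_add_one hb.ne']
  have hqne : b / (μ + b) ≠ 0 := by positivity
  rw [Real.rpow_add_one hqne, Nat.factorial_succ, pow_succ]
  push_cast
  have hfac : ((n.factorial : ℝ)) ≠ 0 := Nat.cast_ne_zero.mpr n.factorial_ne_zero
  have hΓb : Real.Gamma b ≠ 0 := (Real.Gamma_pos_of_pos hb).ne'
  field_simp

lemma nb_hasSum_id {μ b : ℝ} (hμ : 0 < μ) (hb : 0 < b) :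
    HasSum (fun n : ℕ => (n : ℝ) * nbPMF μ b n) μ := by
  have hμ' : 0 < μ * (b + 1) / b := by positivity
  have h := (nb_hasSum hμ' (by positivity : (0:ℝ) < b + 1)).mul_left μ
  rw [mul_one] at h
  have e : (fun n : ℕ => μ * nbPMF (μ * (b + 1) / b) (b + 1) n) =
      fun n : ℕ => (((n + 1 : ℕ) : ℝ)) * nbPMF μ b (n + 1) := by
    funext n
    rw [← nb_shift hμ hb n]
    push_cast
    ring
  rw [e] at h
  have := (hasSum_nat_add_iff (f := fun n : ℕ => (n : ℝ) * nbPMF μ b n) 1).mp h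
  simpa using this

lemma nb_hasSum_fac2 {μ b : ℝ} (hμ : 0 < μ) (hb : 0 < b) :
    HasSum (fun n : ℕ => (n : ℝ) * ((n : ℝ) - 1) * nbPMF μ b n) ((b + 1) / b * μ ^ 2) := by
  have hμ' : 0 < μ * (b + 1) / b := by positivity
  have h := (nb_hasSum_id hμ' (by positivity : (0:ℝ) < b + 1)).mul_left μ
  have e : (fun n : ℕ => μ * ((n : ℝ) * nbPMF (μ * (b + 1) / b) (b + 1) n)) =
      fun n : ℕ => (((n + 1 : ℕ) : ℝ)) * (((n + 1 : ℕ) : ℝ) - 1) * nbPMF μ b (n + 1) := by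
    funext n
    have := nb_shift hμ hb n
    push_cast
    push_cast at this
    calc μ * ((n : ℝ) * nbPMF (μ * (b + 1) / b) (b + 1) n)
        = (n : ℝ) * (μ * nbPMF (μ * (b + 1) / b) (b + 1) n) := by ring
      _ = (n : ℝ) * (((n : ℝ) + 1) * nbPMF μ b (n + 1)) := by rw [← this]
      _ = ((n : ℝ) + 1) * ((n : ℝ) + 1 - 1) * nbPMF μ b (n + 1) := by ring
  rw [e] at h
  have h2 := (hasSum_nat_add_iff (f := fun n : ℕ => (n : ℝ) * ((n : ℝ) - 1) * nbPMF μ b n) 1).mp h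
  have : μ * (μ * (b + 1) / b) + ∑ i ∈ Finset.range 1,
      (i : ℝ) * ((i : ℝ) - 1) * nbPMF μ b i = (b + 1) / b * μ ^ 2 := by
    simp
    ring
  rwa [this] at h2


lemma bin0 (ε : ℝ) (n : ℕ) : ∑ k ∈ Finset.range (n + 1), binomPMF n ε k = 1 := by
  have h := add_pow ε (1 - ε) n
  rw [show ε + (1 - ε) = 1 by ring, one_pow] at h
  rw [h]
  exact Finset.sum_congr rfl (fun k _ => by unfold binomPMF; ring)

lemma binom_step (ε : ℝ) (n k : ℕ) :
    ((k : ℝ) + 1) * binomPMF (n + 1) ε (k + 1) = ((n : ℝ) + 1) * ε * binomPMF n ε k := by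
  unfold binomPMF
  have h : ((n : ℝ) + 1) * (n.choose k) = ((n + 1).choose (k + 1)) * ((k : ℝ) + 1) := by
    have := Nat.add_one_mul_choose_eq n k
    have h2 := congrArg (Nat.cast : ℕ → ℝ) this
    push_cast at h2
    linarith [h2]
  rw [Nat.succ_sub_succ]
  calc ((k : ℝ) + 1) * ((n + 1).choose (k + 1) * ε ^ (k + 1) * (1 - ε) ^ (n - k))
      = ((n + 1).choose (k + 1) * ((k : ℝ) + 1)) * ε ^ (k + 1) * (1 - ε) ^ (n - k) := by ring
    _ = (((n : ℝ) + 1) * (n.choose k)) * ε ^ (k + 1) * (1 - ε) ^ (n - k) := by rw [← h]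
    _ = ((n : ℝ) + 1) * ε * ((n.choose k) * ε ^ k * (1 - ε) ^ (n - k)) := by
        rw [pow_succ]; ring

lemma bin1 (ε : ℝ) (n : ℕ) :
    ∑ k ∈ Finset.range (n + 1), (k : ℝ) * binomPMF n ε k = n * ε := by
  cases n with
  | zero => simp [binomPMF]
  | succ n =>
    rw [Finset.sum_range_succ']
    have e : ∀ k, ((k + 1 : ℕ) : ℝ) * binomPMF (n + 1) ε (k + 1) =
        ((n : ℝ) + 1) * ε * binomPMF n ε k := by
      intro k
      push_cast
      exact binom_step ε n k
    simp only [e, Nat.cast_zero, zero_mul, add_zero, ← Finset.mul_sum, bin0]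
    push_cast
    ring

lemma bin2 (ε : ℝ) (n : ℕ) :
    ∑ k ∈ Finset.range (n + 1), (k : ℝ) * ((k : ℝ) - 1) * binomPMF n ε k
      = n * ((n : ℝ) - 1) * ε ^ 2 := by
  cases n with
  | zero => simp [binomPMF]
  | succ n =>
    rw [Finset.sum_range_succ']
    have e : ∀ k : ℕ, ((k + 1 : ℕ) : ℝ) * (((k + 1 : ℕ) : ℝ) - 1) * binomPMF (n + 1) ε (k + 1) =
        ((n : ℝ) + 1) * ε * ((k : ℝ) * binomPMF n ε k) := by
      intro k
      push_cast
      calc ((k : ℝ) + 1) * ((k : ℝ) + 1 - 1) * binomPMF (n + 1) ε (k + 1)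
          = (k : ℝ) * (((k : ℝ) + 1) * binomPMF (n + 1) ε (k + 1)) := by ring
        _ = (k : ℝ) * (((n : ℝ) + 1) * ε * binomPMF n ε k) := by rw [binom_step]
        _ = ((n : ℝ) + 1) * ε * ((k : ℝ) * binomPMF n ε k) := by ring
    simp only [e, Nat.cast_zero, zero_mul, mul_zero, add_zero, ← Finset.mul_sum, bin1]
    push_cast
    ring

/-- generic row-sum reduction -/
lemma row_sum (ε : ℝ) (n : ℕ) (g : ℕ → ℝ) (c0 c1 c2 : ℝ)
    (hg : ∀ k, k ∈ Finset.range (n + 1) →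
      g k = c0 + c1 * (k : ℝ) + c2 * ((k : ℝ) * ((k : ℝ) - 1))) :
    ∑ k ∈ Finset.range (n + 1), binomPMF n ε k * g k
      = c0 + c1 * (n * ε) + c2 * (n * ((n : ℝ) - 1) * ε ^ 2) := by
  have e : ∀ k ∈ Finset.range (n + 1), binomPMF n ε k * g k
      = c0 * binomPMF n ε k + c1 * ((k : ℝ) * binomPMF n ε k)
        + c2 * ((k : ℝ) * ((k : ℝ) - 1) * binomPMF n ε k) := by
    intro k hk
    rw [hg k hk]
    ring
  rw [Finset.sum_congr rfl e]
  rw [Finset.sum_add_distrib, Finset.sum_add_distrib, ← Finset.mul_sum, ← Finset.mul_sum,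
    ← Finset.mul_sum, bin0, bin1, bin2]
  ring


lemma bin_nonneg {ε : ℝ} (hε0 : 0 ≤ ε) (hε1 : ε ≤ 1) (n k : ℕ) : 0 ≤ binomPMF n ε k := by
  unfold binomPMF
  have h : (0:ℝ) ≤ 1 - ε := by linarith
  positivity

def nbEquiv : (Σ n : ℕ, Fin (n + 1)) ≃ ℕ × ℕ where
  toFun s := (s.2.val, s.1 - s.2.val)
  invFun q := ⟨q.1 + q.2, ⟨q.1, by omega⟩⟩
  left_inv := by
    rintro ⟨n, k, hk⟩
    show (⟨k + (n - k), ⟨k, by omega⟩⟩ : Σ n : ℕ, Fin (n + 1)) = ⟨n, ⟨k, hk⟩⟩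
    have h : k + (n - k) = n := by omega
    exact Sigma.ext h ((Fin.heq_ext_iff (by show k + (n - k) + 1 = n + 1; omega)).mpr rfl)
  right_inv := by
    rintro ⟨k1, k2⟩
    simp

lemma tsum_joint {μ b ε : ℝ} (hμ : 0 < μ) (hb : 0 < b) (hε0 : 0 < ε) (hε1 : ε < 1)
    (g : ℕ → ℕ → ℝ) (hg : ∀ k1 k2, 0 ≤ g k1 k2) (a0 a1 a2 : ℝ)
    (hrow : ∀ n : ℕ, ∑ k ∈ Finset.range (n + 1), binomPMF n ε k * g k (n - k)
      = a0 + a1 * n + a2 * ((n : ℝ) * ((n : ℝ) - 1))) :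
    ∑' q : ℕ × ℕ, nbPMF μ b (q.1 + q.2) * binomPMF (q.1 + q.2) ε q.1 * g q.1 q.2
      = a0 + a1 * μ + a2 * ((b + 1) / b * μ ^ 2) := by
  set F : ℕ × ℕ → ℝ :=
    fun q => nbPMF μ b (q.1 + q.2) * binomPMF (q.1 + q.2) ε q.1 * g q.1 q.2 with hFdef
  set G : (Σ n : ℕ, Fin (n + 1)) → ℝ := fun s => F (nbEquiv s) with hGdef
  have hGeq : ∀ (n : ℕ) (k : Fin (n + 1)),
      G ⟨n, k⟩ = nbPMF μ b n * (binomPMF n ε k.val * g k.val (n - k.val)) := by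
    intro n k
    have hkn : k.val + (n - k.val) = n := by omega
    simp only [hGdef, hFdef, nbEquiv, Equiv.coe_fn_mk, hkn, mul_assoc]
  have hGS : HasSum (fun n : ℕ => nbPMF μ b n * (a0 + a1 * n + a2 * ((n:ℝ) * ((n:ℝ) - 1))))
      (a0 + a1 * μ + a2 * ((b + 1) / b * μ ^ 2)) := by
    have h0 := (nb_hasSum hμ hb).mul_left a0
    have h1 := (nb_hasSum_id hμ hb).mul_left a1
    have h2 := (nb_hasSum_fac2 hμ hb).mul_left a2
    have h := (h0.add h1).add h2
    have e : (fun n : ℕ => (a0 * nbPMF μ b n + a1 * ((n:ℝ) * nbPMF μ b n))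
        + a2 * ((n:ℝ) * ((n:ℝ) - 1) * nbPMF μ b n))
        = fun n : ℕ => nbPMF μ b n * (a0 + a1 * n + a2 * ((n:ℝ) * ((n:ℝ) - 1))) := by
      funext n
      ring
    rw [e, mul_one] at h
    exact h
  have hrow' : ∀ n : ℕ, ∑ k : Fin (n + 1), G ⟨n, k⟩
      = nbPMF μ b n * (a0 + a1 * n + a2 * ((n:ℝ) * ((n:ℝ) - 1))) := by
    intro n
    calc ∑ k : Fin (n + 1), G ⟨n, k⟩
        = ∑ k : Fin (n + 1), nbPMF μ b n * (binomPMF n ε k.val * g k.val (n - k.val)) :=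
          Finset.sum_congr rfl (fun k _ => hGeq n k)
      _ = nbPMF μ b n * ∑ k : Fin (n + 1), binomPMF n ε k.val * g k.val (n - k.val) := by
          rw [Finset.mul_sum]
      _ = nbPMF μ b n * ∑ k ∈ Finset.range (n + 1), binomPMF n ε k * g k (n - k) := by
          rw [Fin.sum_univ_eq_sum_range (fun k => binomPMF n ε k * g k (n - k))]
      _ = _ := by rw [hrow n]
  have hGnn : ∀ s, 0 ≤ G s := by
    rintro ⟨n, k⟩
    rw [hGeq]
    exact mul_nonneg (nb_nonneg hμ hb n)
      (mul_nonneg (bin_nonneg hε0.le hε1.le n k.val) (hg _ _))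
  have hsummG : Summable G := by
    rw [summable_sigma_of_nonneg hGnn]
    constructor
    · intro n
      exact (hasSum_fintype fun k : Fin (n + 1) => G ⟨n, k⟩).summable
    · have e : (fun n : ℕ => ∑' k : Fin (n + 1), G ⟨n, k⟩)
          = fun n : ℕ => nbPMF μ b n * (a0 + a1 * n + a2 * ((n:ℝ) * ((n:ℝ) - 1))) := by
        funext n
        rw [tsum_fintype, hrow' n]
      rw [e]
      exact hGS.summable
  have hsig := hsummG.hasSum.sigma
    (fun n => hasSum_fintype (fun k : Fin (n + 1) => G ⟨n, k⟩))
  rw [funext hrow'] at hsig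
  have htot : ∑' s, G s = a0 + a1 * μ + a2 * ((b + 1) / b * μ ^ 2) :=
    hsig.unique hGS
  rw [← nbEquiv.tsum_eq F]
  exact htot

/-- Binomial thinning of negative binomial data yields positively correlated folds:
if `X ~ NB(μ, b)`, `X1 | X = x ~ Binomial(x, ε)` with `ε ∈ (0,1)`, and `X2 = X - X1`,
then `Cov(X1, X2) = ε(1-ε) μ²/b > 0` and consequently
`Cor(X1, X2) = sqrt(ε(1-ε)) / sqrt(b²/μ² + b/μ + ε(1-ε))`.
Here the joint pmf of `(X1, X2)` is `j k1 k2 = nbPMF μ b (k1+k2) * binomPMF (k1+k2) ε k1`. -/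
theorem binomial_thinning_nb_correlation (μ b ε : ℝ) (hμ : 0 < μ) (hb : 0 < b)
    (hε : ε ∈ Set.Ioo (0 : ℝ) 1) :
    let j : ℕ → ℕ → ℝ := fun k1 k2 => nbPMF μ b (k1 + k2) * binomPMF (k1 + k2) ε k1
    let E : (ℕ → ℕ → ℝ) → ℝ := fun g => ∑' q : ℕ × ℕ, j q.1 q.2 * g q.1 q.2
    let cov : ℝ :=
      E (fun k1 k2 => (k1 : ℝ) * (k2 : ℝ)) -
        E (fun k1 _ => (k1 : ℝ)) * E (fun _ k2 => (k2 : ℝ))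
    let var1 : ℝ := E (fun k1 _ => (k1 : ℝ) ^ 2) - (E (fun k1 _ => (k1 : ℝ))) ^ 2
    let var2 : ℝ := E (fun _ k2 => (k2 : ℝ) ^ 2) - (E (fun _ k2 => (k2 : ℝ))) ^ 2
    cov = ε * (1 - ε) * μ ^ 2 / b ∧ 0 < cov ∧
      cov / (Real.sqrt var1 * Real.sqrt var2) =
        Real.sqrt (ε * (1 - ε)) /
          Real.sqrt (b ^ 2 / μ ^ 2 + b / μ + ε * (1 - ε)) := by
  obtain ⟨hε0, hε1⟩ := hε
  have h1ε : 0 < 1 - ε := by linarith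
  intro j E cov var1 var2
  -- row sums
  have hrow1 : ∀ n : ℕ, ∑ k ∈ Finset.range (n + 1), binomPMF n ε k * ((k : ℝ))
      = 0 + ε * n + 0 * ((n : ℝ) * ((n : ℝ) - 1)) := by
    intro n
    rw [row_sum ε n (fun k => (k : ℝ)) 0 1 0 (fun k _ => by push_cast; ring)]
    ring
  have hrow2 : ∀ n : ℕ, ∑ k ∈ Finset.range (n + 1), binomPMF n ε k * (((n - k : ℕ) : ℝ))
      = 0 + (1 - ε) * n + 0 * ((n : ℝ) * ((n : ℝ) - 1)) := by
    intro n
    rw [row_sum ε n (fun k => ((n - k : ℕ) : ℝ)) (n : ℝ) (-1) 0 (fun k hk => by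
      have hkn : k ≤ n := Nat.lt_succ_iff.mp (Finset.mem_range.mp hk)
      simp only [Nat.cast_sub hkn]; ring)]
    ring
  have hrow12 : ∀ n : ℕ, ∑ k ∈ Finset.range (n + 1),
      binomPMF n ε k * ((k : ℝ) * ((n - k : ℕ) : ℝ))
      = 0 + 0 * n + (ε * (1 - ε)) * ((n : ℝ) * ((n : ℝ) - 1)) := by
    intro n
    rw [row_sum ε n (fun k => (k : ℝ) * ((n - k : ℕ) : ℝ)) 0 ((n : ℝ) - 1) (-1) (fun k hk => by
      have hkn : k ≤ n := Nat.lt_succ_iff.mp (Finset.mem_range.mp hk)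
      simp only [Nat.cast_sub hkn]; ring)]
    ring
  have hrowsq1 : ∀ n : ℕ, ∑ k ∈ Finset.range (n + 1), binomPMF n ε k * ((k : ℝ) ^ 2)
      = 0 + ε * n + ε ^ 2 * ((n : ℝ) * ((n : ℝ) - 1)) := by
    intro n
    rw [row_sum ε n (fun k => (k : ℝ) ^ 2) 0 1 1 (fun k _ => by push_cast; ring)]
    ring
  have hrowsq2 : ∀ n : ℕ, ∑ k ∈ Finset.range (n + 1),
      binomPMF n ε k * (((n - k : ℕ) : ℝ) ^ 2)
      = 0 + (1 - ε) * n + (1 - ε) ^ 2 * ((n : ℝ) * ((n : ℝ) - 1)) := by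
    intro n
    rw [row_sum ε n (fun k => ((n - k : ℕ) : ℝ) ^ 2) ((n : ℝ) ^ 2) (1 - 2 * n) 1 (fun k hk => by
      have hkn : k ≤ n := Nat.lt_succ_iff.mp (Finset.mem_range.mp hk)
      simp only [Nat.cast_sub hkn]; ring)]
    ring
  -- expectation values
  have hE1 : (∑' q : ℕ × ℕ, nbPMF μ b (q.1 + q.2) * binomPMF (q.1 + q.2) ε q.1 * (q.1 : ℝ))
      = ε * μ :=
    (tsum_joint hμ hb hε0 hε1 (fun k1 _ => (k1 : ℝ)) (fun k1 _ => Nat.cast_nonneg k1)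
      0 ε 0 hrow1).trans (by ring)
  have hE2 : (∑' q : ℕ × ℕ, nbPMF μ b (q.1 + q.2) * binomPMF (q.1 + q.2) ε q.1 * (q.2 : ℝ))
      = (1 - ε) * μ :=
    (tsum_joint hμ hb hε0 hε1 (fun _ k2 => (k2 : ℝ)) (fun _ k2 => Nat.cast_nonneg k2)
      0 (1 - ε) 0 hrow2).trans (by ring)
  have hE12 : (∑' q : ℕ × ℕ, nbPMF μ b (q.1 + q.2) * binomPMF (q.1 + q.2) ε q.1 *
      ((q.1 : ℝ) * (q.2 : ℝ))) = ε * (1 - ε) * ((b + 1) / b * μ ^ 2) :=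
    (tsum_joint hμ hb hε0 hε1 (fun k1 k2 => (k1 : ℝ) * (k2 : ℝ))
      (fun k1 k2 => by positivity) 0 0 (ε * (1 - ε)) hrow12).trans (by ring)
  have hEsq1 : (∑' q : ℕ × ℕ, nbPMF μ b (q.1 + q.2) * binomPMF (q.1 + q.2) ε q.1 *
      ((q.1 : ℝ) ^ 2)) = ε * μ + ε ^ 2 * ((b + 1) / b * μ ^ 2) :=
    (tsum_joint hμ hb hε0 hε1 (fun k1 _ => (k1 : ℝ) ^ 2) (fun k1 _ => by positivity)
      0 ε (ε ^ 2) hrowsq1).trans (by ring)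
  have hEsq2 : (∑' q : ℕ × ℕ, nbPMF μ b (q.1 + q.2) * binomPMF (q.1 + q.2) ε q.1 *
      ((q.2 : ℝ) ^ 2)) = (1 - ε) * μ + (1 - ε) ^ 2 * ((b + 1) / b * μ ^ 2) :=
    (tsum_joint hμ hb hε0 hε1 (fun _ k2 => (k2 : ℝ) ^ 2) (fun _ k2 => by positivity)
      0 (1 - ε) ((1 - ε) ^ 2) hrowsq2).trans (by ring)
  simp only [cov, var1, var2, E, j]
  rw [hE1, hE2, hE12, hEsq1, hEsq2]
  have hc : ε * (1 - ε) * ((b + 1) / b * μ ^ 2) - ε * μ * ((1 - ε) * μ)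
      = ε * (1 - ε) * μ ^ 2 / b := by
    field_simp
    ring
  rw [hc]
  refine ⟨rfl, div_pos (mul_pos (mul_pos hε0 h1ε) (pow_pos hμ 2)) hb, ?_⟩
  have hv1 : ε * μ + ε ^ 2 * ((b + 1) / b * μ ^ 2) - (ε * μ) ^ 2
      = ε * μ * (b + ε * μ) / b := by
    field_simp
    ring
  have hv2 : (1 - ε) * μ + (1 - ε) ^ 2 * ((b + 1) / b * μ ^ 2) - ((1 - ε) * μ) ^ 2
      = (1 - ε) * μ * (b + (1 - ε) * μ) / b := by
    field_simp
    ring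
  rw [hv1, hv2]
  set C : ℝ := (b + ε * μ) * (b + (1 - ε) * μ) with hCdef
  have hC1 : (0:ℝ) < b + ε * μ := by positivity
  have hC2 : (0:ℝ) < b + (1 - ε) * μ := add_pos hb (mul_pos h1ε hμ)
  have hCpos : 0 < C := mul_pos hC1 hC2
  have hden : Real.sqrt (ε * μ * (b + ε * μ) / b) *
      Real.sqrt ((1 - ε) * μ * (b + (1 - ε) * μ) / b)
      = Real.sqrt (ε * (1 - ε)) * ((μ / b) * Real.sqrt C) := by
    rw [← Real.sqrt_mul (by positivity)]
    rw [show ε * μ * (b + ε * μ) / b * ((1 - ε) * μ * (b + (1 - ε) * μ) / b)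
      = ε * (1 - ε) * ((μ / b) ^ 2 * C) by rw [hCdef]; field_simp]
    rw [Real.sqrt_mul (mul_nonneg hε0.le h1ε.le), Real.sqrt_mul (sq_nonneg (μ / b)),
      Real.sqrt_sq (by positivity)]
  have hrhs : b ^ 2 / μ ^ 2 + b / μ + ε * (1 - ε) = C / μ ^ 2 := by
    rw [hCdef]
    field_simp
    ring
  rw [hden, hrhs, Real.sqrt_div hCpos.le, Real.sqrt_sq hμ.le]
  have hsA : 0 < Real.sqrt (ε * (1 - ε)) := Real.sqrt_pos.mpr (mul_pos hε0 h1ε)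
  have hsC : 0 < Real.sqrt C := Real.sqrt_pos.mpr hCpos
  rw [div_eq_div_iff (by positivity) (by positivity)]
  rw [show Real.sqrt (ε * (1 - ε)) * (Real.sqrt (ε * (1 - ε)) * ((μ / b) * Real.sqrt C))
    = (Real.sqrt (ε * (1 - ε)) * Real.sqrt (ε * (1 - ε))) * ((μ / b) * Real.sqrt C) by ring,
    Real.mul_self_sqrt (mul_nonneg hε0.le h1ε.le)]
  field_simp
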